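/- With z₂ = ρ/p and z₃ = u, the jump of the third 1D entropy variable V₃ = -ρW/p satisfies [[V₃]] = -⟨W⟩[[z₂]] - ⟨z₂⟩⟨⟨z₃⟩⟩_L[[z₃]], where ⟨⟨z₃⟩⟩_L is the Lorentz mean satisfying [[W]] = ⟨⟨z₃⟩⟩_L[[z₃]], ⟨·⟩ the arithmetic mean, and [[·]] the jump. -/

import Mathlib

open Real

/-- Jump of the third 1D entropy variable `V₃ = -ρW/p`:
`[[V₃]] = -⟨W⟩[[z₂]] - ⟨z₂⟩⟨⟨z₃⟩⟩_L[[z₃]]` with `z₂ = ρ/p`, `z₃ = u`. -/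
theorem jump_V3 (ρL uL pL ρR uR pR : ℝ)
    (hρL : 0 < ρL) (hρR : 0 < ρR) (hpL : 0 < pL) (hpR : 0 < pR)
    (huL : |uL| < 1) (huR : |uR| < 1)
    (WL WR LM : ℝ)
    (hWL : WL = 1 / Real.sqrt (1 - uL ^ 2))
    (hWR : WR = 1 / Real.sqrt (1 - uR ^ 2))
    (hLM : LM = (uL + uR) /
      (Real.sqrt (1 - uL ^ 2) * Real.sqrt (1 - uR ^ 2) *
        (Real.sqrt (1 - uL ^ 2) + Real.sqrt (1 - uR ^ 2)))) :
    (-(ρR * WR) / pR) - (-(ρL * WL) / pL)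
      = -((WL + WR) / 2) * (ρR / pR - ρL / pL)
        - ((ρL / pL + ρR / pR) / 2) * LM * (uR - uL) := by
  have hL : (0:ℝ) < 1 - uL ^ 2 := by
    have := abs_lt.mp huL; nlinarith [this.1, this.2]
  have hR : (0:ℝ) < 1 - uR ^ 2 := by
    have := abs_lt.mp huR; nlinarith [this.1, this.2]
  set sL := Real.sqrt (1 - uL ^ 2) with hsL
  set sR := Real.sqrt (1 - uR ^ 2) with hsR
  have hsLpos : 0 < sL := Real.sqrt_pos.mpr hL
  have hsRpos : 0 < sR := Real.sqrt_pos.mpr hR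
  have hsL2 : sL ^ 2 = 1 - uL ^ 2 := Real.sq_sqrt hL.le
  have hsR2 : sR ^ 2 = 1 - uR ^ 2 := Real.sq_sqrt hR.le
  have key : WR - WL = LM * (uR - uL) := by
    rw [hWL, hWR, hLM]
    field_simp
    linear_combination hsL2 - hsR2
  have hWLv : WL = 1 / sL := hWL
  have hWRv : WR = 1 / sR := hWR
  have : (-(ρR * WR) / pR) - (-(ρL * WL) / pL)
      = -((WL + WR) / 2) * (ρR / pR - ρL / pL)
        - ((ρL / pL + ρR / pR) / 2) * (WR - WL) := by
    field_simp; ring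
  rw [this, key]; ring
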